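/- Let A = (a_{ij}) be an m×n (0,1)-matrix and let N_A denote the number of entries of A equal to 1. Let k be a positive integer with k ≤ min(m,n). Then the number of pairs (π₁,π₂), where π₁ is a permutation of [m] and π₂ is a permutation of [n], such that a_{π₁(ℓ)π₂(ℓ)} = 1 for every ℓ ∈ [k], is at most C(N_A,k) · k! · (m−k)! · (n−k)!. Equivalently, if Π₁ and Π₂ are independent and uniformly distributed random permutations of [m] and [n] respectively, then Pr{ a_{Π₁(ℓ)Π₂(ℓ)} = 1 for all ℓ ∈ [k] } ≤ C(N_A,k) / (k!·C(m,k)·C(n,k)). -/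

import Mathlib

open Finset

lemma perm_fiber_card_le {m k : ℕ} (hkm : k ≤ m) (v : Fin k → Fin m)
    (hv : Function.Injective v) :
    Nat.card {π : Equiv.Perm (Fin m) // ∀ ℓ : Fin k, π (Fin.castLE hkm ℓ) = v ℓ} ≤
      Nat.factorial (m - k) := by
  classical
  have hScard : Fintype.card {x : Fin m // x ∉ Set.range v} = m - k := by
    have h1 : Fintype.card {x : Fin m // x ∈ Set.range v} = k := by
      rw [Fintype.card_congr (Equiv.ofInjective v hv).symm, Fintype.card_fin]
    rw [Fintype.card_subtype_compl (· ∈ Set.range v), h1, Fintype.card_fin]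
  have key : ∀ π : {π : Equiv.Perm (Fin m) // ∀ ℓ : Fin k, π (Fin.castLE hkm ℓ) = v ℓ},
      ∀ j : Fin (m - k), (π.1 ⟨k + j.1, by have := j.2; omega⟩ : Fin m) ∉ Set.range v := by
    rintro π j ⟨ℓ, hℓ⟩
    rw [← π.2 ℓ] at hℓ
    have := π.1.injective hℓ
    have h2 := congrArg Fin.val this
    simp only [Fin.castLE] at h2
    have := ℓ.2
    omega
  set Φ : {π : Equiv.Perm (Fin m) // ∀ ℓ : Fin k, π (Fin.castLE hkm ℓ) = v ℓ} →
      (Fin (m - k) ↪ {x : Fin m // x ∉ Set.range v}) := fun π =>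
    ⟨fun j => ⟨π.1 ⟨k + j.1, by have := j.2; omega⟩, key π j⟩, by
      intro j j' h
      have := π.1.injective (congrArg Subtype.val h)
      have h2 := congrArg Fin.val this
      simp only at h2
      exact Fin.ext (by omega)⟩ with hΦ
  have hΦinj : Function.Injective Φ := by
    intro π π' h
    have hval : ∀ j : Fin (m - k),
        (π.1 ⟨k + j.1, by have := j.2; omega⟩ : Fin m) =
        π'.1 ⟨k + j.1, by have := j.2; omega⟩ := by
      intro j
      have := congrFun (congrArg (fun e => Subtype.val ∘ (Function.Embedding.toFun e)) h) j
      exact this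
    apply Subtype.ext
    apply Equiv.ext
    intro i
    by_cases hi : i.1 < k
    · have : i = Fin.castLE hkm ⟨i.1, hi⟩ := Fin.ext rfl
      rw [this, π.2, π'.2]
    · have hj : i.1 - k < m - k := by have := i.2; omega
      have : i = ⟨k + (⟨i.1 - k, hj⟩ : Fin (m - k)).1, by omega⟩ := Fin.ext (by simp; omega)
      rw [this]
      exact hval ⟨i.1 - k, hj⟩
  calc Nat.card {π : Equiv.Perm (Fin m) // ∀ ℓ : Fin k, π (Fin.castLE hkm ℓ) = v ℓ}
      ≤ Nat.card (Fin (m - k) ↪ {x : Fin m // x ∉ Set.range v}) :=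
        Nat.card_le_card_of_injective Φ hΦinj
    _ = Nat.factorial (m - k) := by
        rw [Nat.card_eq_fintype_card, Fintype.card_embedding_eq, hScard, Fintype.card_fin,
          Nat.descFactorial_self]

theorem diag_ones_count_bound (m n k : ℕ) (hk : 0 < k) (hkm : k ≤ m) (hkn : k ≤ n)
    (A : Fin m → Fin n → Bool) :
    Nat.card {π : Equiv.Perm (Fin m) × Equiv.Perm (Fin n) //
        ∀ ℓ : Fin k, A (π.1 (Fin.castLE hkm ℓ)) (π.2 (Fin.castLE hkn ℓ)) = true} ≤
      Nat.choose (Nat.card {p : Fin m × Fin n // A p.1 p.2 = true}) k *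
        Nat.factorial k * Nat.factorial (m - k) * Nat.factorial (n - k) ∧
    (Nat.card {π : Equiv.Perm (Fin m) × Equiv.Perm (Fin n) //
        ∀ ℓ : Fin k, A (π.1 (Fin.castLE hkm ℓ)) (π.2 (Fin.castLE hkn ℓ)) = true} : ℝ) /
        (Nat.factorial m * Nat.factorial n) ≤
      (Nat.choose (Nat.card {p : Fin m × Fin n // A p.1 p.2 = true}) k : ℝ) /
        (Nat.factorial k * Nat.choose m k * Nat.choose n k) := by
  classical
  set N := Nat.card {p : Fin m × Fin n // A p.1 p.2 = true} with hN
  set T : Finset (Equiv.Perm (Fin m) × Equiv.Perm (Fin n)) :=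
    univ.filter fun π => ∀ ℓ : Fin k, A (π.1 (Fin.castLE hkm ℓ)) (π.2 (Fin.castLE hkn ℓ)) = true
    with hT
  have hcardT : Nat.card {π : Equiv.Perm (Fin m) × Equiv.Perm (Fin n) //
      ∀ ℓ : Fin k, A (π.1 (Fin.castLE hkm ℓ)) (π.2 (Fin.castLE hkn ℓ)) = true} = T.card := by
    rw [Nat.card_eq_fintype_card, Fintype.card_subtype]
  set f : (Equiv.Perm (Fin m) × Equiv.Perm (Fin n)) → (Fin k → Fin m) × (Fin k → Fin n) :=
    fun π => (fun ℓ => π.1 (Fin.castLE hkm ℓ), fun ℓ => π.2 (Fin.castLE hkn ℓ)) with hf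
  set t := T.image f with ht
  -- properties of elements of t
  have htprop : ∀ b ∈ t, (∀ ℓ : Fin k, A (b.1 ℓ) (b.2 ℓ) = true) ∧
      Function.Injective b.1 ∧ Function.Injective b.2 := by
    intro b hb
    obtain ⟨π, hπ, rfl⟩ := mem_image.mp hb
    have hπ' := (mem_filter.mp hπ).2
    refine ⟨fun ℓ => hπ' ℓ, ?_, ?_⟩
    · exact π.1.injective.comp (Fin.castLE_injective hkm)
    · exact π.2.injective.comp (Fin.castLE_injective hkn)
  -- cardinality of t
  have htcard : t.card ≤ Nat.choose N k * Nat.factorial k := by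
    have h1 : Nat.card {b // b ∈ t} ≤
        Nat.card (Fin k ↪ {p : Fin m × Fin n // A p.1 p.2 = true}) := by
      refine Nat.card_le_card_of_injective
        (fun b => ⟨fun ℓ => ⟨(b.1.1 ℓ, b.1.2 ℓ), (htprop b.1 b.2).1 ℓ⟩, ?_⟩) ?_
      · intro ℓ ℓ' h
        exact (htprop b.1 b.2).2.1 (congrArg (fun x => x.val.1) h)
      · intro b b' h
        apply Subtype.ext
        have h1 : ∀ ℓ : Fin k, b.1.1 ℓ = b'.1.1 ℓ ∧ b.1.2 ℓ = b'.1.2 ℓ := by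
          intro ℓ
          have := congrFun (congrArg (fun e => Subtype.val ∘ e.toFun) h) ℓ
          simp only [Function.comp] at this
          exact ⟨congrArg Prod.fst this, congrArg Prod.snd this⟩
        exact Prod.ext (funext fun ℓ => (h1 ℓ).1) (funext fun ℓ => (h1 ℓ).2)
    rw [Nat.card_eq_fintype_card, Fintype.card_coe, Nat.card_eq_fintype_card,
      Fintype.card_embedding_eq, Fintype.card_fin, ← Nat.card_eq_fintype_card, ← hN] at h1
    calc t.card ≤ N.descFactorial k := h1
      _ = Nat.choose N k * Nat.factorial k := by
          rw [Nat.descFactorial_eq_factorial_mul_choose, Nat.mul_comm]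
  -- fiber bound
  have hfiber : ∀ b ∈ t, (T.filter fun a => f a = b).card ≤
      Nat.factorial (m - k) * Nat.factorial (n - k) := by
    intro b hb
    have hinj1 := (htprop b hb).2.1
    have hinj2 := (htprop b hb).2.2
    have h1 : Nat.card {x // x ∈ T.filter fun a => f a = b} ≤
        Nat.card ({π : Equiv.Perm (Fin m) // ∀ ℓ : Fin k, π (Fin.castLE hkm ℓ) = b.1 ℓ} ×
          {π : Equiv.Perm (Fin n) // ∀ ℓ : Fin k, π (Fin.castLE hkn ℓ) = b.2 ℓ}) := by
      refine Nat.card_le_card_of_injective (fun x => (⟨x.1.1, ?_⟩, ⟨x.1.2, ?_⟩)) ?_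
      · intro ℓ
        have := (mem_filter.mp x.2).2
        exact congrFun (congrArg Prod.fst this) ℓ
      · intro ℓ
        have := (mem_filter.mp x.2).2
        exact congrFun (congrArg Prod.snd this) ℓ
      · intro x x' h
        apply Subtype.ext
        exact Prod.ext (congrArg (fun y => y.1.val) h) (congrArg (fun y => y.2.val) h)
    rw [Nat.card_eq_fintype_card, Fintype.card_coe] at h1
    calc (T.filter fun a => f a = b).card
        ≤ _ := h1
      _ = Nat.card {π : Equiv.Perm (Fin m) // ∀ ℓ : Fin k, π (Fin.castLE hkm ℓ) = b.1 ℓ} *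
          Nat.card {π : Equiv.Perm (Fin n) // ∀ ℓ : Fin k, π (Fin.castLE hkn ℓ) = b.2 ℓ} :=
          Nat.card_prod _ _
      _ ≤ Nat.factorial (m - k) * Nat.factorial (n - k) :=
          Nat.mul_le_mul (perm_fiber_card_le hkm b.1 hinj1) (perm_fiber_card_le hkn b.2 hinj2)
  -- main count
  have main : T.card ≤ Nat.choose N k * Nat.factorial k *
      Nat.factorial (m - k) * Nat.factorial (n - k) := by
    have hmaps : ∀ x ∈ T, f x ∈ t := fun x hx => mem_image_of_mem f hx
    rw [Finset.card_eq_sum_card_fiberwise hmaps]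
    calc ∑ b ∈ t, (T.filter fun a => f a = b).card
        ≤ ∑ _b ∈ t, Nat.factorial (m - k) * Nat.factorial (n - k) :=
          Finset.sum_le_sum hfiber
      _ = t.card * (Nat.factorial (m - k) * Nat.factorial (n - k)) := by
          rw [Finset.sum_const, smul_eq_mul]
      _ ≤ (Nat.choose N k * Nat.factorial k) *
            (Nat.factorial (m - k) * Nat.factorial (n - k)) :=
          Nat.mul_le_mul_right _ htcard
      _ = Nat.choose N k * Nat.factorial k * Nat.factorial (m - k) * Nat.factorial (n - k) := by
          ring
  have count := hcardT ▸ main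
  refine ⟨count, ?_⟩
  -- real inequality
  have hd1 : (0 : ℝ) < Nat.factorial m * Nat.factorial n := by positivity
  have hd2 : (0 : ℝ) < Nat.factorial k * Nat.choose m k * Nat.choose n k := by
    have h1 : 0 < Nat.choose m k := Nat.choose_pos hkm
    have h2 : 0 < Nat.choose n k := Nat.choose_pos hkn
    have h3 : 0 < Nat.factorial k := Nat.factorial_pos k
    positivity
  rw [div_le_div_iff₀ hd1 hd2]
  have natineq : Nat.card {π : Equiv.Perm (Fin m) × Equiv.Perm (Fin n) //
        ∀ ℓ : Fin k, A (π.1 (Fin.castLE hkm ℓ)) (π.2 (Fin.castLE hkn ℓ)) = true} *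
      (Nat.factorial k * Nat.choose m k * Nat.choose n k) ≤
      Nat.choose N k * (Nat.factorial m * Nat.factorial n) := by
    calc _ ≤ (Nat.choose N k * Nat.factorial k * Nat.factorial (m - k) * Nat.factorial (n - k)) *
        (Nat.factorial k * Nat.choose m k * Nat.choose n k) :=
          Nat.mul_le_mul_right _ count
      _ = Nat.choose N k * ((Nat.choose m k * Nat.factorial k * Nat.factorial (m - k)) *
            (Nat.choose n k * Nat.factorial k * Nat.factorial (n - k))) := by ring
      _ = Nat.choose N k * (Nat.factorial m * Nat.factorial n) := by
          rw [Nat.choose_mul_factorial_mul_factorial hkm,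
            Nat.choose_mul_factorial_mul_factorial hkn]
  exact_mod_cast natineq
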